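/- Let H be an m×n matrix with entries in {0,1}, and suppose H = Σ_{ℓ∈L} H_ℓ (as a sum of integer matrices) for a finite collection {H_ℓ}_{ℓ∈L} of m×n matrices with entries in {0,1}. Let {P_ℓ}_{ℓ∈L} be a collection of M×M permutation matrices, and define the mM×nM matrix H̃ = Σ_{ℓ∈L} H_ℓ ⊗ P_ℓ (Kronecker products), with rows indexed by pairs (j,a) and columns by pairs (i,b). If ω̃ = (ω̃_{(i,b)}) is a pseudo-codeword of H̃ (i.e., ω̃ ∈ P(H̃)), then the vector ω ∈ ℝ^n defined by ω_i = (1/M) Σ_{b} ω̃_{(i,b)} is a pseudo-codeword of H (i.e., ω ∈ P(H)). -/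

import Mathlib

/-- The fundamental polytope `P(H)` of a matrix `H` (with entries in `{0,1}`):
`ω ∈ P(H)` iff `0 ≤ ω i ≤ 1` for all `i` and for every row `j` and every
odd-cardinality subset `S` of the support `N(j)` of row `j`,
`∑_{i ∈ S} ω i − ∑_{i ∈ N(j) \ S} ω i ≤ |S| − 1`. -/
def inFP {α β : Type} [Fintype α] [Fintype β] [DecidableEq β]
    (H : Matrix α β ℤ) (ω : β → ℝ) : Prop :=
  (∀ i, 0 ≤ ω i ∧ ω i ≤ 1) ∧
  ∀ (j : α) (S : Finset β),
    (∀ i ∈ S, H j i = 1) → Odd S.card →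
    (∑ i ∈ S, ω i) - (∑ i ∈ (Finset.univ.filter fun i => H j i = 1) \ S, ω i)
      ≤ (S.card : ℝ) - 1

/-- If `ω̃` is a pseudo-codeword of `H̃ = ∑_ℓ H_ℓ ⊗ P_ℓ`, then the averaged
vector `ω_i = (1/M) ∑_b ω̃_{(i,b)}` is a pseudo-codeword of `H = ∑_ℓ H_ℓ`. -/
theorem pseudo_codeword_wraps
    {m n M : ℕ} {ι : Type} [Fintype ι]
    (H : Matrix (Fin m) (Fin n) ℤ)
    (Hl : ι → Matrix (Fin m) (Fin n) ℤ)
    (hH01 : ∀ j i, H j i = 0 ∨ H j i = 1)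
    (hHl01 : ∀ ℓ j i, Hl ℓ j i = 0 ∨ Hl ℓ j i = 1)
    (hsum : H = ∑ ℓ, Hl ℓ)
    (σ : ι → Equiv.Perm (Fin M))
    (Htilde : Matrix (Fin m × Fin M) (Fin n × Fin M) ℤ)
    (hHt : Htilde = ∑ ℓ, Matrix.kroneckerMap (· * ·) (Hl ℓ)
        (Matrix.of fun a b => if σ ℓ a = b then (1 : ℤ) else 0))
    (ωt : Fin n × Fin M → ℝ)
    (hωt : inFP Htilde ωt) :
    inFP H (fun i => (1 / (M : ℝ)) * ∑ b : Fin M, ωt (i, b)) := by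
  classical
  obtain ⟨hbd, hcon⟩ := hωt
  constructor
  · intro i
    rcases Nat.eq_zero_or_pos M with hM | hM
    · subst hM
      simp
    have hM' : (0:ℝ) < M := by exact_mod_cast hM
    constructor
    · apply mul_nonneg (by positivity)
      exact Finset.sum_nonneg fun b _ => (hbd (i, b)).1
    · have h1 : ∑ b : Fin M, ωt (i, b) ≤ (M : ℝ) := by
        calc ∑ b : Fin M, ωt (i, b) ≤ ∑ _b : Fin M, (1:ℝ) :=
              Finset.sum_le_sum fun b _ => (hbd (i, b)).2
          _ = (M : ℝ) := by simp
      calc (1 / (M:ℝ)) * ∑ b : Fin M, ωt (i, b) ≤ (1 / (M:ℝ)) * M :=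
            mul_le_mul_of_nonneg_left h1 (by positivity)
        _ = 1 := by field_simp
  · intro j S hS hodd
    have hScard : 1 ≤ S.card := by
      obtain ⟨k, hk⟩ := hodd; omega
    have hScardR : (1:ℝ) ≤ (S.card : ℝ) := by exact_mod_cast hScard
    rcases Nat.eq_zero_or_pos M with hM | hM
    · subst hM
      simp only [Nat.cast_zero, div_zero, Finset.univ_eq_empty, Finset.sum_empty, mul_zero,
        zero_mul, sub_zero]
      simp only [Finset.sum_const, smul_zero]
      linarith
    have hM' : (0:ℝ) < M := by exact_mod_cast hM
    -- unique decomposition of each entry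
    have hrow : ∀ i, H j i = 1 → ∃ ℓ, Hl ℓ j i = 1 ∧ ∀ ℓ', ℓ' ≠ ℓ → Hl ℓ' j i = 0 := by
      intro i hi
      have h1 : (∑ ℓ, Hl ℓ j i) = 1 := by
        rw [← hi, hsum, Matrix.sum_apply]
      have hex : ∃ ℓ, Hl ℓ j i = 1 := by
        by_contra hno
        push_neg at hno
        have hz : ∀ ℓ, Hl ℓ j i = 0 := fun ℓ => (hHl01 ℓ j i).resolve_right (hno ℓ)
        simp [hz] at h1
      obtain ⟨ℓ, hℓ⟩ := hex
      refine ⟨ℓ, hℓ, fun ℓ' hne => ?_⟩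
      by_contra h0
      have hℓ' : Hl ℓ' j i = 1 := (hHl01 ℓ' j i).resolve_left h0
      have hpair : ∑ x ∈ ({ℓ, ℓ'} : Finset ι), Hl x j i = 2 := by
        rw [Finset.sum_pair (Ne.symm hne), hℓ, hℓ']; norm_num
      have h2 : (2:ℤ) ≤ ∑ x, Hl x j i := by
        rw [← hpair]
        refine Finset.sum_le_sum_of_subset_of_nonneg (Finset.subset_univ _) ?_
        intro x _ _
        rcases hHl01 x j i with h | h <;> simp [h]
      rw [h1] at h2; norm_num at h2
    obtain ⟨i₀, hi₀⟩ := Finset.card_pos.mp (lt_of_lt_of_le one_pos hScard)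
    haveI : Nonempty ι := ⟨(hrow i₀ (hS i₀ hi₀)).choose⟩
    set c : Fin n → ι := fun i =>
      if h : H j i = 1 then (hrow i h).choose else Classical.arbitrary ι with hc
    have hc1 : ∀ i, H j i = 1 → Hl (c i) j i = 1 := by
      intro i hi
      simp only [hc, dif_pos hi]
      exact (hrow i hi).choose_spec.1
    have hc2 : ∀ i, H j i = 1 → ∀ ℓ', ℓ' ≠ c i → Hl ℓ' j i = 0 := by
      intro i hi ℓ' hne
      refine (hrow i hi).choose_spec.2 ℓ' ?_
      simpa only [hc, dif_pos hi] using hne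
    have hent1 : ∀ (a : Fin M) (i : Fin n) (b : Fin M), H j i = 1 →
        Htilde (j, a) (i, b) = if σ (c i) a = b then 1 else 0 := by
      intro a i b hi
      rw [hHt, Matrix.sum_apply]
      rw [Finset.sum_eq_single (c i)]
      · simp [Matrix.kroneckerMap_apply, hc1 i hi]
      · intro ℓ' _ hne
        simp [Matrix.kroneckerMap_apply, hc2 i hi ℓ' hne]
      · intro h; exact absurd (Finset.mem_univ _) h
    have hent0 : ∀ (a : Fin M) (i : Fin n) (b : Fin M), H j i = 0 →
        Htilde (j, a) (i, b) = 0 := by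
      intro a i b hi
      have h1 : (∑ ℓ, Hl ℓ j i) = 0 := by rw [← hi, hsum, Matrix.sum_apply]
      have hall : ∀ ℓ, Hl ℓ j i = 0 := by
        intro ℓ
        by_contra h0
        have hℓ : Hl ℓ j i = 1 := (hHl01 ℓ j i).resolve_left h0
        have hle : Hl ℓ j i ≤ ∑ x, Hl x j i :=
          Finset.single_le_sum (f := fun x => Hl x j i)
            (fun x _ => by rcases hHl01 x j i with h | h <;> simp [h]) (Finset.mem_univ ℓ)
        rw [h1, hℓ] at hle; norm_num at hle
      rw [hHt, Matrix.sum_apply]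
      simp [Matrix.kroneckerMap_apply, hall]
    have hsupp : ∀ a : Fin M,
        (Finset.univ.filter fun p : Fin n × Fin M => Htilde (j, a) p = 1)
          = (Finset.univ.filter fun i => H j i = 1).image (fun i => (i, σ (c i) a)) := by
      intro a
      ext ⟨i, b⟩
      simp only [Finset.mem_filter, Finset.mem_univ, true_and, Finset.mem_image]
      constructor
      · intro hp
        rcases hH01 j i with h0 | h1
        · rw [hent0 a i b h0] at hp; norm_num at hp
        · refine ⟨i, h1, ?_⟩
          rw [hent1 a i b h1] at hp
          by_cases hb : σ (c i) a = b
          · rw [hb]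
          · simp [hb] at hp
      · rintro ⟨i', hi', heq⟩
        obtain ⟨rfl, rfl⟩ : i' = i ∧ σ (c i') a = b := Prod.mk.injEq .. ▸ heq
        rw [hent1 a i' _ hi']
        simp
    have key : ∀ a : Fin M,
        (∑ i ∈ S, ωt (i, σ (c i) a))
          - (∑ i ∈ (Finset.univ.filter fun i => H j i = 1) \ S, ωt (i, σ (c i) a))
          ≤ (S.card : ℝ) - 1 := by
      intro a
      have hinj : Function.Injective (fun i : Fin n => (i, σ (c i) a)) :=
        fun x y h => congrArg Prod.fst h
      have h := hcon (j, a) (S.image fun i => (i, σ (c i) a))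
        (by
          intro p hp
          simp only [Finset.mem_image] at hp
          obtain ⟨i, hi, rfl⟩ := hp
          rw [hent1 a i _ (hS i hi)]; simp)
        (by rw [Finset.card_image_of_injective _ hinj]; exact hodd)
      rw [Finset.card_image_of_injective _ hinj, hsupp a,
        ← Finset.image_sdiff _ _ hinj, Finset.sum_image (fun x _ y _ h => hinj h),
        Finset.sum_image (fun x _ y _ h => hinj h)] at h
      exact h
    have hreindex : ∀ (T : Finset (Fin n)),
        ∑ a : Fin M, ∑ i ∈ T, ωt (i, σ (c i) a) = ∑ i ∈ T, ∑ b : Fin M, ωt (i, b) := by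
      intro T
      rw [Finset.sum_comm]
      refine Finset.sum_congr rfl fun i _ => ?_
      exact Fintype.sum_equiv (σ (c i)) _ _ (fun a => rfl)
    set N : Finset (Fin n) := Finset.univ.filter fun i => H j i = 1 with hN
    have hsum_le : (∑ i ∈ S, ∑ b : Fin M, ωt (i, b))
        - (∑ i ∈ N \ S, ∑ b : Fin M, ωt (i, b)) ≤ (M : ℝ) * ((S.card : ℝ) - 1) := by
      calc (∑ i ∈ S, ∑ b : Fin M, ωt (i, b)) - (∑ i ∈ N \ S, ∑ b : Fin M, ωt (i, b))
          = ∑ a : Fin M, ((∑ i ∈ S, ωt (i, σ (c i) a)) - ∑ i ∈ N \ S, ωt (i, σ (c i) a)) := by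
            rw [Finset.sum_sub_distrib, hreindex, hreindex]
        _ ≤ ∑ _a : Fin M, ((S.card : ℝ) - 1) := Finset.sum_le_sum fun a _ => key a
        _ = (M : ℝ) * ((S.card : ℝ) - 1) := by
            simp [Finset.sum_const, nsmul_eq_mul, mul_sub]
    have hfin : (1 / (M:ℝ)) * ((∑ i ∈ S, ∑ b : Fin M, ωt (i, b))
        - (∑ i ∈ N \ S, ∑ b : Fin M, ωt (i, b)))
        ≤ (1 / (M:ℝ)) * ((M : ℝ) * ((S.card : ℝ) - 1)) :=
      mul_le_mul_of_nonneg_left hsum_le (by positivity)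
    rw [← mul_assoc, one_div_mul_cancel hM'.ne', one_mul] at hfin
    calc (∑ i ∈ S, (1 / (M:ℝ)) * ∑ b : Fin M, ωt (i, b))
          - (∑ i ∈ N \ S, (1 / (M:ℝ)) * ∑ b : Fin M, ωt (i, b))
        = (1 / (M:ℝ)) * ((∑ i ∈ S, ∑ b : Fin M, ωt (i, b))
            - (∑ i ∈ N \ S, ∑ b : Fin M, ωt (i, b))) := by
          rw [← Finset.mul_sum, ← Finset.mul_sum, mul_sub]
      _ ≤ (S.card : ℝ) - 1 := hfin
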